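/- For every s ∈ ℂ with Re s > 0 and d > 0, ∫_d^∞ log(x/d - 1) x^{-s-1} dx = d^{-s}/s² - (ψ(1+s) + γ)/(s d^s), where ψ is the digamma function and γ the Euler–Mascheroni constant. -/

import Mathlib

open MeasureTheory Set Filter Asymptotics
open scoped Topology

/-- The digamma function `ψ = Γ'/Γ`. -/
noncomputable def digamma (z : ℂ) : ℂ := deriv Complex.Gamma z / Complex.Gamma z

namespace DigammaAux

open Complex

lemma mellin_indicator_eq (g : ℝ → ℂ) (v : ℂ) :
    mellin (Set.indicator (Ioo (0:ℝ) 1) g) v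
      = ∫ t in Ioo (0:ℝ) 1, (t : ℂ) ^ (v - 1) * g t := by
  rw [mellin]
  have : (fun t : ℝ => (t : ℂ) ^ (v - 1) • Set.indicator (Ioo (0:ℝ) 1) g t)
      = Set.indicator (Ioo (0:ℝ) 1) (fun t => (t : ℂ) ^ (v - 1) * g t) := by
    funext t
    by_cases ht : t ∈ Ioo (0:ℝ) 1 <;>
      simp [Set.indicator_of_mem, Set.indicator_of_notMem, ht, smul_eq_mul]
  rw [this, setIntegral_indicator measurableSet_Ioo,
    show Ioi (0:ℝ) ∩ Ioo 0 1 = Ioo 0 1 by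
      rw [inter_eq_right]; exact Ioo_subset_Ioi_self]

lemma indicator_atTop_bigO (g : ℝ → ℂ) (a : ℝ) :
    (Set.indicator (Ioo (0:ℝ) 1) g) =O[atTop] fun t : ℝ => t ^ (-a) := by
  refine EventuallyEq.trans_isBigO ?_ (isBigO_zero _ _)
  filter_upwards [Filter.eventually_ge_atTop (1:ℝ)] with t ht
  exact Set.indicator_of_notMem (fun h => absurd h.2 (not_lt.mpr ht)) _

lemma integral_Ioo_cpow {v : ℂ} (hv : 0 < v.re) :
    ∫ t in Ioo (0:ℝ) 1, (t : ℂ) ^ (v - 1) = 1 / v := by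
  have hv0 : v ≠ 0 := fun h => by simp [h] at hv
  rw [← integral_Ioc_eq_integral_Ioo, ← intervalIntegral.integral_of_le zero_le_one,
    integral_cpow (Or.inl (by simp; linarith))]
  simp [hv0, Complex.zero_cpow hv0, Complex.one_cpow]

lemma log_mellin {s : ℂ} (hs : 0 < s.re) :
    IntegrableOn (fun t : ℝ => (Real.log t : ℂ) * (t : ℂ) ^ (s - 1)) (Ioo (0:ℝ) 1) ∧
    ∫ t in Ioo (0:ℝ) 1, (Real.log t : ℂ) * (t : ℂ) ^ (s - 1) = -(1 / s ^ 2) := by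
  have hs0 : s ≠ 0 := fun h => by simp [h] at hs
  set f : ℝ → ℂ := Set.indicator (Ioo (0:ℝ) 1) (fun _ => (1:ℂ)) with hf
  have hfc : LocallyIntegrableOn f (Ioi 0) :=
    (((integrableOn_const (C := (1:ℂ)) measure_Ioo_lt_top.ne).integrable_indicator
      measurableSet_Ioo).locallyIntegrable).locallyIntegrableOn _
  have htop : f =O[atTop] fun t : ℝ => t ^ (-(s.re + 1)) := indicator_atTop_bigO _ _
  have hbot : f =O[𝓝[>] (0:ℝ)] fun t : ℝ => t ^ (-(0:ℝ)) := by
    simp only [neg_zero, Real.rpow_zero]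
    refine isBigO_of_le _ fun t => ?_
    by_cases ht : t ∈ Ioo (0:ℝ) 1 <;> simp [hf, Set.indicator_of_mem, Set.indicator_of_notMem, ht]
  obtain ⟨hconv, hderiv⟩ := mellin_hasDerivAt_of_isBigO_rpow hfc htop (by linarith) hbot hs
  have hev : ∀ᶠ v in nhds s, mellin f v = 1 / v := by
    filter_upwards [(isOpen_lt continuous_const Complex.continuous_re).mem_nhds hs] with v hv
    rw [mellin_indicator_eq]
    simp only [mul_one]
    exact integral_Ioo_cpow hv
  have h2 : HasDerivAt (fun v : ℂ => 1 / v) (mellin (fun t => Real.log t • f t) s) s :=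
    hderiv.congr_of_eventuallyEq (hev.mono fun v h => h.symm)
  have h3 : HasDerivAt (fun v : ℂ => 1 / v) (-(1 / s ^ 2)) s := by
    simpa [one_div] using hasDerivAt_inv hs0
  have hval : mellin (fun t => Real.log t • f t) s = -(1 / s ^ 2) := h2.unique h3
  have hconv' : IntegrableOn (fun t : ℝ => (t:ℂ) ^ (s-1) • (Real.log t • f t)) (Ioi 0) := hconv
  have heq : EqOn (fun t : ℝ => (t:ℂ) ^ (s-1) • (Real.log t • f t))
      (Set.indicator (Ioo (0:ℝ) 1) (fun t => (Real.log t : ℂ) * (t:ℂ) ^ (s-1))) (Ioi (0:ℝ)) := by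
    intro t _
    by_cases ht : t ∈ Ioo (0:ℝ) 1 <;>
      · simp [hf, Set.indicator_of_mem, Set.indicator_of_notMem, ht, smul_eq_mul,
          Complex.real_smul]
        try ring
  have h4 : IntegrableOn
      (Set.indicator (Ioo (0:ℝ) 1) (fun t => (Real.log t : ℂ) * (t:ℂ) ^ (s-1))) (Ioi (0:ℝ)) :=
    hconv'.congr_fun heq measurableSet_Ioi
  constructor
  · exact (h4.mono_set Ioo_subset_Ioi_self).congr_fun
      (fun t ht => by rw [Set.indicator_of_mem ht]) measurableSet_Ioo
  · have : mellin (fun t => Real.log t • f t) s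
        = ∫ t in Ioo (0:ℝ) 1, (Real.log t : ℂ) * (t:ℂ) ^ (s-1) := by
      rw [mellin, setIntegral_congr_fun measurableSet_Ioi heq,
        setIntegral_indicator measurableSet_Ioo,
        show Ioi (0:ℝ) ∩ Ioo 0 1 = Ioo 0 1 by
          rw [inter_eq_right]; exact Ioo_subset_Ioi_self]
    rw [← this, hval]

lemma one_add_ne {s : ℂ} (hs : 0 < s.re) : ∀ m : ℕ, (1 : ℂ) + s ≠ -m := by
  intro m h
  have := congrArg Complex.re h
  simp only [Complex.add_re, Complex.one_re, Complex.neg_re, Complex.natCast_re] at this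
  have hm : (0:ℝ) ≤ (m:ℝ) := Nat.cast_nonneg m
  linarith

lemma beta_log_mellin {s : ℂ} (hs : 0 < s.re) :
    IntegrableOn (fun t : ℝ => (Real.log t : ℂ) * ((1:ℂ) - (t:ℂ)) ^ (s - 1)) (Ioo (0:ℝ) 1) ∧
    ∫ t in Ioo (0:ℝ) 1, (Real.log t : ℂ) * ((1:ℂ) - (t:ℂ)) ^ (s - 1)
      = -((_root_.digamma (1 + s) + (Real.eulerMascheroniConstant : ℂ)) / s) := by
  have hs0 : s ≠ 0 := fun h => by simp [h] at hs
  set f : ℝ → ℂ := Set.indicator (Ioo (0:ℝ) 1) (fun t : ℝ => ((1:ℂ) - (t:ℂ)) ^ (s - 1)) with hf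
  have hbeta : IntegrableOn (fun t : ℝ => ((1:ℂ) - (t:ℂ)) ^ (s - 1)) (Ioo (0:ℝ) 1) := by
    have h := (Complex.betaIntegral_convergent (u := 1) (v := s) (by norm_num) hs).1
    rw [integrableOn_Ioc_iff_integrableOn_Ioo] at h
    refine h.congr_fun (fun t _ => ?_) measurableSet_Ioo
    simp [Complex.cpow_zero]
  have hfint : Integrable f := hbeta.integrable_indicator measurableSet_Ioo
  have hfc : LocallyIntegrableOn f (Ioi 0) := hfint.locallyIntegrable.locallyIntegrableOn _
  have htop : f =O[atTop] fun t : ℝ => t ^ (-(2:ℝ)) := indicator_atTop_bigO _ _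
  have hbot : f =O[𝓝[>] (0:ℝ)] fun t : ℝ => t ^ (-(0:ℝ)) := by
    simp only [neg_zero, Real.rpow_zero]
    rw [Asymptotics.isBigO_iff]
    refine ⟨max 1 ((1/2 : ℝ) ^ (s.re - 1)), ?_⟩
    filter_upwards [Ioo_mem_nhdsGT (by norm_num : (0:ℝ) < 1/2)] with t ht
    obtain ⟨ht0, ht2⟩ := ht
    have ht1 : t < 1 := ht2.trans (by norm_num)
    have htm : t ∈ Ioo (0:ℝ) 1 := ⟨ht0, ht1⟩
    rw [hf, Set.indicator_of_mem htm]
    have hpos : (0:ℝ) < 1 - t := by linarith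
    have hcast : (1:ℂ) - (t:ℂ) = ((1 - t : ℝ) : ℂ) := by push_cast; ring
    rw [hcast, Complex.norm_cpow_eq_rpow_re_of_pos hpos, Complex.sub_re,
      Complex.one_re]
    have hle : (1 - t) ^ (s.re - 1) ≤ max 1 ((1/2 : ℝ) ^ (s.re - 1)) := by
      rcases le_or_gt 0 (s.re - 1) with h | h
      · exact le_max_of_le_left (Real.rpow_le_one hpos.le (by linarith) h)
      · refine le_max_of_le_right (Real.rpow_le_rpow_of_nonpos (by norm_num) (by linarith) h.le)
    simpa using hle
  obtain ⟨hconv, hderiv⟩ := mellin_hasDerivAt_of_isBigO_rpow hfc htop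
    (by norm_num : (1:ℂ).re < 2) hbot (by norm_num : (0:ℝ) < (1:ℂ).re)
  have hev : ∀ᶠ v in nhds (1:ℂ), mellin f v = Gamma v * Gamma s / Gamma (v + s) := by
    filter_upwards [(isOpen_lt continuous_const Complex.continuous_re).mem_nhds
      (by norm_num : (0:ℝ) < (1:ℂ).re)] with v hv
    rw [mellin_indicator_eq]
    have hbi : (∫ t in Ioo (0:ℝ) 1, (t:ℂ) ^ (v - 1) * ((1:ℂ) - (t:ℂ)) ^ (s - 1))
        = Complex.betaIntegral v s := by
      rw [Complex.betaIntegral, intervalIntegral.integral_of_le zero_le_one,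
        integral_Ioc_eq_integral_Ioo]
    rw [hbi, eq_div_iff (Complex.Gamma_ne_zero_of_re_pos (by
      simp only [Complex.add_re]; linarith))]
    rw [mul_comm (Complex.betaIntegral v s) _, ← Complex.Gamma_mul_Gamma_eq_betaIntegral hv hs]
  have hd1s : DifferentiableAt ℂ Gamma (1 + s) := Complex.differentiableAt_Gamma _ (one_add_ne hs)
  have hGs1ne : Gamma (1 + s) ≠ 0 := Complex.Gamma_ne_zero_of_re_pos (by
    simp only [Complex.add_re, Complex.one_re]; linarith)
  have hadd : HasDerivAt (fun v : ℂ => Gamma (v + s)) (deriv Gamma (1 + s)) 1 := by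
    simpa [Function.comp_def] using hd1s.hasDerivAt.comp 1 ((hasDerivAt_id (1:ℂ)).add_const s)
  have hmul : HasDerivAt (fun v : ℂ => Gamma v * Gamma s)
      (-(Real.eulerMascheroniConstant : ℂ) * Gamma s) 1 :=
    Complex.hasDerivAt_Gamma_one.mul_const _
  have hdiv := hmul.div hadd hGs1ne
  have h2 : HasDerivAt (fun v : ℂ => Gamma v * Gamma s / Gamma (v + s))
      (mellin (fun t => Real.log t • f t) 1) 1 :=
    hderiv.congr_of_eventuallyEq (hev.mono fun v h => h.symm)
  have hval := h2.unique hdiv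
  have heq : EqOn (fun t : ℝ => (t:ℂ) ^ ((1:ℂ)-1) • (Real.log t • f t))
      (Set.indicator (Ioo (0:ℝ) 1)
        (fun t => (Real.log t : ℂ) * ((1:ℂ) - (t:ℂ)) ^ (s - 1))) (Ioi (0:ℝ)) := by
    intro t _
    by_cases ht : t ∈ Ioo (0:ℝ) 1 <;>
      · simp [hf, Set.indicator_of_mem, Set.indicator_of_notMem, ht, smul_eq_mul,
          Complex.real_smul, Complex.cpow_zero]
  have hmel : mellin (fun t => Real.log t • f t) 1
      = ∫ t in Ioo (0:ℝ) 1, (Real.log t : ℂ) * ((1:ℂ) - (t:ℂ)) ^ (s - 1) := by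
    rw [mellin, setIntegral_congr_fun measurableSet_Ioi heq,
      setIntegral_indicator measurableSet_Ioo,
      show Ioi (0:ℝ) ∩ Ioo 0 1 = Ioo 0 1 by
        rw [inter_eq_right]; exact Ioo_subset_Ioi_self]
  constructor
  · have hconv' : IntegrableOn (fun t : ℝ => (t:ℂ) ^ ((1:ℂ)-1) • (Real.log t • f t))
        (Ioi 0) := hconv
    have h4 := hconv'.congr_fun heq measurableSet_Ioi
    exact (h4.mono_set Ioo_subset_Ioi_self).congr_fun
      (fun t ht => by rw [Set.indicator_of_mem ht]) measurableSet_Ioo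
  · rw [← hmel, hval]
    have hGs : Gamma (1 + s) = s * Gamma s := by
      rw [add_comm, Complex.Gamma_add_one s hs0]
    have hGsne : Gamma s ≠ 0 := Complex.Gamma_ne_zero_of_re_pos hs
    rw [_root_.digamma]
    rw [Complex.Gamma_one]
    field_simp [hGs]
    rw [hGs]
    ring

lemma reflected {s : ℂ} (hs : 0 < s.re) :
    IntegrableOn (fun t : ℝ => (Real.log (1 - t) : ℂ) * (t:ℂ) ^ (s - 1)) (Ioo (0:ℝ) 1) ∧
    ∫ t in Ioo (0:ℝ) 1, (Real.log (1 - t) : ℂ) * (t:ℂ) ^ (s - 1)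
      = -((_root_.digamma (1 + s) + (Real.eulerMascheroniConstant : ℂ)) / s) := by
  obtain ⟨hD, hDval⟩ := beta_log_mellin hs
  set f : ℝ → ℂ := fun t => (Real.log t : ℂ) * ((1:ℂ) - (t:ℂ)) ^ (s - 1) with hfdef
  have hkey : ∀ x : ℝ, f (1 - x) = (Real.log (1 - x) : ℂ) * (x:ℂ) ^ (s - 1) := by
    intro x
    have : (1:ℂ) - ((1 - x : ℝ) : ℂ) = (x : ℂ) := by push_cast; ring
    rw [hfdef]; simp only []; rw [this]
  have hii : IntervalIntegrable f volume 0 1 :=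
    (intervalIntegrable_iff_integrableOn_Ioc_of_le zero_le_one).mpr
      ((integrableOn_Ioc_iff_integrableOn_Ioo).mpr hD)
  have hii2 := hii.comp_sub_left 1
  simp only [sub_zero, sub_self] at hii2
  have hii3 : IntegrableOn (fun x => f (1 - x)) (Ioo (0:ℝ) 1) :=
    (integrableOn_Ioc_iff_integrableOn_Ioo).mp
      ((intervalIntegrable_iff_integrableOn_Ioc_of_le zero_le_one).mp hii2.symm)
  constructor
  · exact hii3.congr_fun (fun t _ => hkey t) measurableSet_Ioo
  · have h1 : ∫ t in Ioo (0:ℝ) 1, (Real.log (1 - t) : ℂ) * (t:ℂ) ^ (s - 1)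
        = ∫ t in Ioo (0:ℝ) 1, f (1 - t) :=
      setIntegral_congr_fun measurableSet_Ioo (fun t _ => (hkey t).symm)
    rw [h1, ← integral_Ioc_eq_integral_Ioo, ← intervalIntegral.integral_of_le zero_le_one,
      intervalIntegral.integral_comp_sub_left f 1]
    simp only [sub_zero, sub_self]
    rw [intervalIntegral.integral_of_le zero_le_one, integral_Ioc_eq_integral_Ioo, ← hfdef, hDval]

lemma inv_image_Ioo : (fun v : ℝ => v⁻¹) '' Ioo (0:ℝ) 1 = Ioi (1:ℝ) := by
  ext x
  constructor
  · rintro ⟨v, ⟨hv0, hv1⟩, rfl⟩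
    exact one_lt_inv_iff₀.mpr ⟨hv0, hv1⟩
  · intro hx
    have hx0 : (0:ℝ) < x := lt_trans one_pos hx
    exact ⟨x⁻¹, ⟨inv_pos.mpr hx0, inv_lt_one_of_one_lt₀ hx⟩, inv_inv x⟩

lemma subst_inv (s : ℂ) :
    ∫ u in Ioi (1:ℝ), (Real.log (u - 1) : ℂ) * (u:ℂ) ^ (-s - 1)
      = ∫ v in Ioo (0:ℝ) 1,
          ((Real.log (1 - v) : ℂ) - (Real.log v : ℂ)) * (v:ℂ) ^ (s - 1) := by
  have h := integral_image_eq_integral_abs_deriv_smul (s := Ioo (0:ℝ) 1) measurableSet_Ioo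
    (fun x hx => (hasDerivAt_inv (ne_of_gt hx.1)).hasDerivWithinAt)
    (Set.injOn_of_injective inv_injective)
    (fun u : ℝ => (Real.log (u - 1) : ℂ) * (u:ℂ) ^ (-s - 1))
  rw [inv_image_Ioo] at h
  rw [h]
  refine setIntegral_congr_fun measurableSet_Ioo fun v hv => ?_
  obtain ⟨hv0, hv1⟩ := hv
  have hv0' : (v:ℂ) ≠ 0 := by exact_mod_cast hv0.ne'
  have h1v : (0:ℝ) < 1 - v := by linarith
  have hlog : Real.log (v⁻¹ - 1) = Real.log (1 - v) - Real.log v := by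
    rw [show v⁻¹ - 1 = (1 - v) / v by field_simp, Real.log_div h1v.ne' hv0.ne']
  have harg : (v:ℂ).arg ≠ Real.pi := by
    rw [Complex.arg_ofReal_of_nonneg hv0.le]
    exact (Real.pi_ne_zero).symm
  have hpow : ((v⁻¹ : ℝ) : ℂ) ^ (-s - 1) = ((v:ℂ) ^ (-s - 1))⁻¹ := by
    rw [Complex.ofReal_inv, Complex.inv_cpow _ _ harg]
  have hpow2 : ((v:ℂ) ^ (-s - 1))⁻¹ = (v:ℂ) ^ (s + 1) := by
    rw [show s + 1 = -(-s - 1) by ring, Complex.cpow_neg]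
  have hsplit : (v:ℂ) ^ (s + 1) = (v:ℂ) ^ (s - 1) * (v:ℂ) ^ (2:ℕ) := by
    rw [← Complex.cpow_natCast, ← Complex.cpow_add _ _ hv0']
    congr 1
    push_cast
    ring
  have habs : |(-(v ^ 2)⁻¹ : ℝ)| = (v ^ 2)⁻¹ := by
    rw [abs_neg, abs_inv, abs_of_pos (by positivity)]
  simp only [habs, hlog, hpow, hpow2, hsplit]
  rw [Complex.real_smul]
  push_cast
  have hv2 : ((v:ℂ) ^ (2:ℕ)) ≠ 0 := pow_ne_zero _ hv0'
  field_simp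

end DigammaAux

open DigammaAux

/-- For `Re s > 0` and `d > 0`:
`∫_d^∞ log(x/d - 1) x^{-s-1} dx = d^{-s}/s² - (ψ(1+s) + γ)/(s d^s)`. -/
theorem integral_log_div_sub_one (s : ℂ) (hs : 0 < s.re) (d : ℝ) (hd : 0 < d) :
    ∫ x in Set.Ioi d, ((Real.log (x / d - 1) : ℝ) : ℂ) * (x : ℂ) ^ (-s - 1) =
      (d : ℂ) ^ (-s) / s ^ 2 -
        (digamma (1 + s) + (Real.eulerMascheroniConstant : ℂ)) / (s * (d : ℂ) ^ s) := by
  have hs0 : s ≠ 0 := fun h => by simp [h] at hs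
  have hd0 : (d:ℂ) ≠ 0 := by exact_mod_cast hd.ne'
  set L : ℝ → ℂ := fun x => ((Real.log (x / d - 1) : ℝ) : ℂ) * (x : ℂ) ^ (-s - 1) with hL
  have hstep1 := MeasureTheory.integral_comp_mul_left_Ioi L 1 hd
  rw [mul_one] at hstep1
  have e1 : ∫ x in Ioi d, L x = d • ∫ u in Ioi (1:ℝ), L (d * u) := by
    rw [hstep1, smul_smul, mul_inv_cancel₀ hd.ne', one_smul]
  have e2 : EqOn (fun u : ℝ => L (d * u))
      (fun u : ℝ => (d:ℂ) ^ (-s - 1) * ((Real.log (u - 1) : ℂ) * (u:ℂ) ^ (-s - 1)))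
      (Ioi (1:ℝ)) := by
    intro u hu
    have hu0 : (0:ℝ) < u := lt_trans one_pos hu
    have hdiv : d * u / d - 1 = u - 1 := by
      rw [mul_comm, mul_div_assoc, div_self hd.ne', mul_one]
    have hmul : ((d * u : ℝ) : ℂ) ^ (-s - 1) = (d:ℂ) ^ (-s - 1) * (u:ℂ) ^ (-s - 1) := by
      rw [Complex.ofReal_mul]
      exact Complex.mul_cpow_ofReal_nonneg hd.le hu0.le _
    simp only [hL, hdiv, hmul]
    ring
  have e3 : ∫ u in Ioi (1:ℝ), L (d * u)
      = (d:ℂ) ^ (-s - 1) * ∫ u in Ioi (1:ℝ), (Real.log (u - 1) : ℂ) * (u:ℂ) ^ (-s - 1) := by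
    rw [setIntegral_congr_fun measurableSet_Ioi e2, integral_const_mul]
  obtain ⟨hI1, hI1val⟩ := reflected hs
  obtain ⟨hI0, hI0val⟩ := log_mellin hs
  have e4 : ∫ u in Ioi (1:ℝ), (Real.log (u - 1) : ℂ) * (u:ℂ) ^ (-s - 1)
      = -((_root_.digamma (1 + s) + (Real.eulerMascheroniConstant : ℂ)) / s) - -(1 / s ^ 2) := by
    rw [subst_inv s]
    have hsplit : ∀ v : ℝ, ((Real.log (1 - v) : ℂ) - (Real.log v : ℂ)) * (v:ℂ) ^ (s - 1)
        = (Real.log (1 - v) : ℂ) * (v:ℂ) ^ (s - 1) - (Real.log v : ℂ) * (v:ℂ) ^ (s - 1) :=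
      fun v => by ring
    simp only [hsplit]
    rw [integral_sub hI1 hI0, hI1val, hI0val]
  rw [e1, e3, e4, Complex.real_smul]
  have e5 : (d:ℂ) * (d:ℂ) ^ (-s - 1) = (d:ℂ) ^ (-s) := by
    nth_rewrite 1 [← Complex.cpow_one (d:ℂ)]
    rw [← Complex.cpow_add _ _ hd0]
    congr 1
    ring
  rw [← mul_assoc, e5]
  have hds : (d:ℂ) ^ s ≠ 0 := by
    simp [Complex.cpow_eq_zero_iff, hd0]
  rw [Complex.cpow_neg]
  field_simp
  ring
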